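/- Steiner's Hat is the image of the 3-cusped Steiner hypocycloid under an affine transformation (a rotation, followed by a homothety, an axes-scaling, and a translation). Precisely: for all t ∈ ℝ, Δ_u(t) = C̄ + ( (c²/(2a))·w₁(t), (c²/(2b))·w₂(t) ), where (w₁(t), w₂(t)) = (2 cos t + cos(2t+u), −2 sin t + sin(2t+u)); moreover (w₁(t), w₂(t)) = R_{u/3}( S(t + u/3) ), where S(s) = (2 cos s + cos 2s, −2 sin s + sin 2s) is the Steiner hypocycloid and R_{u/3} is the counterclockwise rotation of ℝ² by angle u/3. -/

import Mathlib

open Real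

noncomputable def steinerHat (a b u t : ℝ) : ℝ × ℝ :=
  (((a ^ 2 - b ^ 2) * (1 + cos (t + u)) * cos t - a ^ 2 * cos u) / a,
   ((a ^ 2 - b ^ 2) * cos t * sin (t + u) - (a ^ 2 - b ^ 2) * sin t - a ^ 2 * sin u) / b)

/-- The Steiner hypocycloid. -/
noncomputable def steinerCurve (s : ℝ) : ℝ × ℝ :=
  (2 * cos s + cos (2 * s), -(2 * sin s) + sin (2 * s))

/-- Counterclockwise rotation of ℝ² by angle `φ`. -/
noncomputable def rot (φ : ℝ) (v : ℝ × ℝ) : ℝ × ℝ :=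
  (cos φ * v.1 - sin φ * v.2, sin φ * v.1 + cos φ * v.2)

/-- Steiner's Hat is the image of the 3-cusped Steiner hypocycloid under an
affine transformation (rotation, homothety, axes-scaling, translation). -/
theorem stmt1 (a b u : ℝ) (hb : 0 < b) (hab : b < a)
    (w : ℝ → ℝ × ℝ)
    (hw : ∀ t : ℝ, w t = (2 * cos t + cos (2 * t + u), -(2 * sin t) + sin (2 * t + u))) :
    ∀ t : ℝ,
      steinerHat a b u t =
        (-((a ^ 2 + b ^ 2) * cos u) / (2 * a) + (a ^ 2 - b ^ 2) / (2 * a) * (w t).1,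
         -((a ^ 2 + b ^ 2) * sin u) / (2 * b) + (a ^ 2 - b ^ 2) / (2 * b) * (w t).2)
      ∧ w t = rot (u / 3) (steinerCurve (t + u / 3)) := by
  intro t
  have ha : a ≠ 0 := by linarith
  have hb' : b ≠ 0 := ne_of_gt hb
  have pyt := sin_sq_add_cos_sq t
  constructor
  · simp only [steinerHat, hw, Prod.mk.injEq]
    rw [show 2*t+u = t+(t+u) by ring]
    constructor
    · rw [cos_add t (t+u), cos_add t u, sin_add t u]
      field_simp
      linear_combination ((a^2-b^2)*cos u) * pyt
    · rw [sin_add t (t+u), cos_add t u, sin_add t u]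
      field_simp
      linear_combination ((a^2-b^2)*sin u) * pyt
  · have key : ∀ s φ : ℝ, rot φ (steinerCurve s) =
        (2*cos (s-φ) + cos (2*s+φ), -(2*sin (s-φ)) + sin (2*s+φ)) := by
      intro s φ
      simp only [rot, steinerCurve, cos_sub, sin_sub, cos_add, sin_add, Prod.mk.injEq]
      constructor <;> ring
    rw [hw, key, show t+u/3-u/3 = t by ring, show 2*(t+u/3)+u/3 = 2*t+u by ring]
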